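/- Consider the Markov chain (Λ̃_k) with Λ̃_{k+1} | Λ̃_k = λ ~ Poisson(λ), started at Λ̃_0 = N for a nonnegative integer N. Then exp(-3N/k) ≤ Pr(Λ̃_k = 0) and Pr(Λ̃_k = 0) ≤ exp(-N/k) for all k ≥ 1. -/

import Mathlib

noncomputable def pg (s : ℝ) : ℝ := Real.exp (s - 1)

lemma pg_bounds : ∀ k : ℕ, 1 ≤ k →
    Real.exp (-3 / k) ≤ pg^[k] 0 ∧ pg^[k] 0 ≤ Real.exp (-1 / k) := by
  intro k hk
  induction k with
  | zero => omega
  | succ k ih =>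
    rcases Nat.eq_or_lt_of_le hk with h1 | h1
    · have : k = 0 := by omega
      subst this
      have : pg^[1] 0 = Real.exp (0 - 1) := rfl
      rw [this]
      refine ⟨Real.exp_le_exp.2 (by norm_num), Real.exp_le_exp.2 (by norm_num)⟩
    · have hk1 : 1 ≤ k := by omega
      obtain ⟨hlo, hhi⟩ := ih hk1
      have hk1R : (1:ℝ) ≤ (k:ℝ) := by exact_mod_cast hk1
      have hkpos : (0:ℝ) < k := by linarith
      have hq : pg^[k+1] 0 = Real.exp (pg^[k] 0 - 1) := by
        rw [Function.iterate_succ_apply']; rfl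
      rw [hq]
      constructor
      · -- lower bound
        apply Real.exp_le_exp.2
        push_cast
        have e1 : 1 - 1/(k:ℝ) ≤ Real.exp (-1/k) := by
          have h := Real.add_one_le_exp (-1/(k:ℝ))
          rw [neg_div] at h ⊢
          linarith
        have h0 : (0:ℝ) ≤ 1 - 1/(k:ℝ) := by
          rw [sub_nonneg, div_le_one hkpos]; linarith
        have e2 : (1 - 1/(k:ℝ))^3 ≤ Real.exp (-1/k)^3 :=
          pow_le_pow_left₀ h0 (by linarith) 3
        have e3 : Real.exp (-1/(k:ℝ))^3 = Real.exp (-3/k) := by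
          rw [← Real.exp_nat_mul]; congr 1; push_cast; ring
        have e4 : 1 - 3/((k:ℝ)+1) ≤ (1 - 1/(k:ℝ))^3 := by
          rw [← sub_nonneg]
          have heq : (1 - 1/(k:ℝ))^3 - (1 - 3/((k:ℝ)+1))
              = (2*(k:ℝ)-1)/((k:ℝ)^3*((k:ℝ)+1)) := by
            field_simp
            ring
          rw [heq]
          exact div_nonneg (by linarith) (by positivity)
        have e5 : 1 - 3/((k:ℝ)+1) ≤ pg^[k] 0 := by
          calc 1 - 3/((k:ℝ)+1) ≤ (1 - 1/(k:ℝ))^3 := e4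
            _ ≤ Real.exp (-1/(k:ℝ))^3 := e2
            _ = Real.exp (-3/(k:ℝ)) := e3
            _ ≤ pg^[k] 0 := hlo
        rw [neg_div]
        linarith
      · -- upper bound
        apply Real.exp_le_exp.2
        push_cast
        have e1 : (1/(k:ℝ)) + 1 ≤ Real.exp (1/k) := Real.add_one_le_exp _
        have e2 : Real.exp (-1/(k:ℝ)) * Real.exp (1/(k:ℝ)) = 1 := by
          rw [← Real.exp_add, ← Real.exp_zero]; congr 1; ring
        have e1' : (1:ℝ) + k ≤ k * Real.exp (1/(k:ℝ)) := by
          have := mul_le_mul_of_nonneg_left e1 hkpos.le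
          rw [mul_add, mul_one, mul_one_div, div_self (ne_of_gt hkpos)] at this
          linarith
        have e3 : Real.exp (-1/(k:ℝ)) ≤ k/(k+1) := by
          rw [le_div_iff₀ (by positivity)]
          nlinarith [mul_le_mul_of_nonneg_left e1' (Real.exp_pos (-1/(k:ℝ))).le, e2,
            Real.exp_pos (-1/(k:ℝ))]
        have h4 : pg^[k] 0 ≤ (k:ℝ)/(k+1) := hhi.trans e3
        have h5 : -1/((k:ℝ)+1) = (k:ℝ)/(k+1) - 1 := by
          field_simp
          ring
        rw [h5]
        exact sub_le_sub_right h4 1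

lemma chain_pgf (N : ℕ) (p : ℕ → ℕ → ℝ)
    (h0 : ∀ j, p 0 j = if j = N then 1 else 0)
    (hstep : ∀ k j, p (k + 1) j =
      ∑' l : ℕ, p k l * (Real.exp (-(l : ℝ)) * (l : ℝ) ^ j / (Nat.factorial j))) :
    ∀ k, (∀ j, 0 ≤ p k j) ∧
      ∀ s ∈ Set.Icc (0:ℝ) 1, HasSum (fun j => p k j * s ^ j) ((pg^[k] s) ^ N) := by
  intro k
  induction k with
  | zero =>
    constructor
    · intro j; rw [h0]; split <;> norm_num
    · intro s hs
      have hfn : (fun j => p 0 j * s ^ j) = (fun j : ℕ => if j = N then s ^ N else 0) := by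
        funext j; rw [h0]
        split
        · next h => subst h; simp
        · simp
      rw [hfn, Function.iterate_zero_apply]
      exact hasSum_ite_eq N (s ^ N)
  | succ k ih =>
    obtain ⟨hnn, hsum⟩ := ih
    have hnn' : ∀ j, 0 ≤ p (k+1) j := by
      intro j; rw [hstep]
      apply tsum_nonneg
      intro l
      apply mul_nonneg (hnn l)
      positivity
    refine ⟨hnn', ?_⟩
    intro s hs
    obtain ⟨hs0, hs1⟩ := hs
    set t : ℝ := Real.exp (s - 1) with ht_def
    have ht : t ∈ Set.Icc (0:ℝ) 1 := by
      constructor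
      · exact (Real.exp_pos _).le
      · rw [ht_def, Real.exp_le_one_iff]
        linarith
    have hiter : pg^[k+1] s = pg^[k] t := by
      rw [Function.iterate_succ_apply]; rfl
    -- the double-indexed family
    set F : ℕ × ℕ → ℝ := fun x =>
      p k x.2 * (Real.exp (-(x.2 : ℝ)) * (x.2 : ℝ) ^ x.1 / (Nat.factorial x.1)) * s ^ x.1
      with hF_def
    have hFnn : ∀ x, 0 ≤ F x := by
      intro x
      apply mul_nonneg (mul_nonneg (hnn x.2) (by positivity))
      positivity
    -- fiberwise over l : sum over j
    have hA : ∀ l : ℕ, HasSum (fun j => F (j, l)) (p k l * t ^ l) := by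
      intro l
      have h1 : HasSum (fun j : ℕ => ((l : ℝ) * s) ^ j / (Nat.factorial j))
          (Real.exp ((l : ℝ) * s)) := by
        rw [Real.exp_eq_exp_ℝ]
        exact NormedSpace.expSeries_div_hasSum_exp _
      have h2 := h1.mul_left (p k l * Real.exp (-(l : ℝ)))
      have hfun : (fun j : ℕ => p k l * Real.exp (-(l : ℝ)) * (((l : ℝ) * s) ^ j / (Nat.factorial j)))
          = fun j => F (j, l) := by
        funext j
        rw [hF_def]
        simp only [mul_pow]
        ring
      have hval : p k l * Real.exp (-(l : ℝ)) * Real.exp ((l : ℝ) * s) = p k l * t ^ l := by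
        rw [mul_assoc, ← Real.exp_add, ht_def, ← Real.exp_nat_mul]
        congr 2
        ring
      rw [hfun, hval] at h2
      exact h2
    -- summability of the swapped family, then of F
    have hG : Summable (fun x : ℕ × ℕ => F (x.2, x.1)) := by
      rw [summable_prod_of_nonneg (fun x => hFnn (x.2, x.1))]
      constructor
      · intro l
        exact (hA l).summable
      · have : (fun l => ∑' j, F (j, l)) = fun l => p k l * t ^ l := by
          funext l
          exact (hA l).tsum_eq
        simpa [this] using (hsum t ht).summable
    have hFs : Summable F := by
      have := hG.prod_symm
      simpa using this
    -- total sum of F equals ((pg^[k] t)^N)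
    have hFtot : HasSum F ((pg^[k] t) ^ N) := by
      have h1 : HasSum (fun x : ℕ × ℕ => F (x.2, x.1)) (∑' x : ℕ × ℕ, F (x.2, x.1)) :=
        hG.hasSum
      have h2 : HasSum (fun l => p k l * t ^ l) (∑' x : ℕ × ℕ, F (x.2, x.1)) :=
        h1.prod_fiberwise hA
      have h3 : (∑' x : ℕ × ℕ, F (x.2, x.1)) = (pg^[k] t) ^ N :=
        h2.unique (hsum t ht)
      rw [h3] at h1
      have : F = (fun x : ℕ × ℕ => F (x.2, x.1)) ∘ (Equiv.prodComm ℕ ℕ) := by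
        funext x; rfl
      rw [this]
      exact ((Equiv.prodComm ℕ ℕ).hasSum_iff).1 (by exact h1)
    -- fiberwise over j
    have hB : ∀ j : ℕ, HasSum (fun l => F (j, l)) (p (k+1) j * s ^ j) := by
      intro j
      have h1 : Summable (fun l => F (j, l)) := hFs.prod_factor j
      have h2 : p (k+1) j * s ^ j = ∑' l, F (j, l) := by
        rw [hstep, ← tsum_mul_right]
      rw [h2]
      exact h1.hasSum
    have := hFtot.prod_fiberwise hB
    rw [hiter]
    exact this

/-- Bounds on the absorption probability of the Poisson recursive training chain:
`p k l` is the probability that the chain is in state `l` at time `k`, started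
at the nonnegative integer `N`, with transition kernel `Poisson(l)` from state `l`. -/
theorem poisson_chain_absorption_bounds (N : ℕ) (p : ℕ → ℕ → ℝ)
    (h0 : ∀ j, p 0 j = if j = N then 1 else 0)
    (hstep : ∀ k j, p (k + 1) j =
      ∑' l : ℕ, p k l * (Real.exp (-(l : ℝ)) * (l : ℝ) ^ j / (Nat.factorial j))) :
    ∀ k : ℕ, 1 ≤ k →
      Real.exp (-3 * (N : ℝ) / k) ≤ p k 0 ∧ p k 0 ≤ Real.exp (-(N : ℝ) / k) := by
  intro k hk
  obtain ⟨hnn, hsum⟩ := chain_pgf N p h0 hstep k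
  -- identify p k 0 with (pg^[k] 0) ^ N
  have h01 : (0:ℝ) ∈ Set.Icc (0:ℝ) 1 := by constructor <;> norm_num
  have hs := hsum 0 h01
  have hfn : (fun j => p k j * (0:ℝ) ^ j) = fun j : ℕ => if j = 0 then p k 0 else 0 := by
    funext j
    rcases Nat.eq_zero_or_pos j with h | h
    · subst h; simp
    · rw [if_neg (by omega), zero_pow (by omega), mul_zero]
  rw [hfn] at hs
  have hval : p k 0 = (pg^[k] 0) ^ N := (hasSum_ite_eq 0 (p k 0)).unique hs
  obtain ⟨hlo, hhi⟩ := pg_bounds k hk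
  have hq0 : (0:ℝ) ≤ pg^[k] 0 := le_trans (Real.exp_pos _).le hlo
  constructor
  · rw [hval]
    calc Real.exp (-3 * (N:ℝ) / k) = Real.exp (-3 / k) ^ N := by
          rw [← Real.exp_nat_mul]; congr 1; ring
      _ ≤ (pg^[k] 0) ^ N := pow_le_pow_left₀ (Real.exp_pos _).le hlo N
  · rw [hval]
    calc (pg^[k] 0) ^ N ≤ Real.exp (-1 / k) ^ N := pow_le_pow_left₀ hq0 hhi N
      _ = Real.exp (-(N:ℝ) / k) := by rw [← Real.exp_nat_mul]; congr 1; ring
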